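/- Define f : ℝ² → ℝ by f(x) = |x₁| + |x₂|, F(x) = (x₁, x₂), and for Δ ∈ (0,1) define F̃_Δ(x) = (x₁ + Δ², x₂ + Δ²) and f̃_Δ(x) = |x₁ + Δ²| + |x₂ + Δ²|. Then: (i) {F̃_Δ : Δ ∈ (0,1)} are fully linear models of F at x̄ = (0,0) with constants κ_F = 1 and κ_G = 1, but F̃_Δ(0,0) ≠ F(0,0); (ii) f̃_Δ is differentiable at (0,0) with gradient (1,1), so its convex subdifferential at (0,0) is the singleton {(1,1)}; (iii) the vector (−1,−1) belongs to the convex subdifferential of f at (0,0); and (iv) the Euclidean distance from (−1,−1) to {(1,1)} equals √8, which does not converge to 0 as Δ → 0. -/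

import Mathlib

open Metric Set Filter

/-- `f(x) = |x₁| + |x₂|`. -/
def f10 (x : EuclideanSpace ℝ (Fin 2)) : ℝ := |x 0| + |x 1|

/-- `F(x) = (x₁, x₂)`, given by components. -/
def F10 (i : Fin 2) (x : EuclideanSpace ℝ (Fin 2)) : ℝ := x i

/-- `F̃_Δ(x) = (x₁ + Δ², x₂ + Δ²)`, given by components. -/
def Ft10 (Δ : ℝ) (i : Fin 2) (x : EuclideanSpace ℝ (Fin 2)) : ℝ := x i + Δ ^ 2

/-- `f̃_Δ(x) = |x₁ + Δ²| + |x₂ + Δ²|`. -/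
def ft10 (Δ : ℝ) (x : EuclideanSpace ℝ (Fin 2)) : ℝ := |x 0 + Δ ^ 2| + |x 1 + Δ ^ 2|

/-- The convex subdifferential of a real-valued function `h` at `x̄`:
`{v : h(x) ≥ h(x̄) + ⟨v, x − x̄⟩ for all x}`. -/
def rSubdiff (h : EuclideanSpace ℝ (Fin 2) → ℝ) (xbar : EuclideanSpace ℝ (Fin 2)) :
    Set (EuclideanSpace ℝ (Fin 2)) :=
  {v | ∀ x, h xbar + (inner ℝ v (x - xbar) : ℝ) ≤ h x}

lemma abs_apply_le_norm' (x : EuclideanSpace ℝ (Fin 2)) (i : Fin 2) : |x i| ≤ ‖x‖ := by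
  rw [EuclideanSpace.norm_eq, ← Real.sqrt_sq_eq_abs]
  apply Real.sqrt_le_sqrt
  have := Finset.single_le_sum (f := fun j => ‖x j‖ ^ 2) (fun j _ => by positivity)
    (Finset.mem_univ i)
  simpa [Real.norm_eq_abs, sq_abs] using this

lemma onevec_apply (i : Fin 2) :
    ((EuclideanSpace.equiv (Fin 2) ℝ).symm ![1, 1] : EuclideanSpace ℝ (Fin 2)) i = 1 := by
  fin_cases i <;> simp

/-- **Example 4.3** (importance of `F̃_Δ(x̄) = F(x̄)`): (i) the `Ft10 Δ` are fully linear
models of `F10` at `x̄ = (0,0)` with constants `κF = κG = 1` on `(0,1)`, but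
`F̃_Δ(0,0) ≠ F(0,0)`; (ii) `f̃_Δ` is differentiable at `(0,0)` with gradient `(1,1)`, so
`∂f̃_Δ(0,0) = {(1,1)}`; (iii) `(−1,−1) ∈ ∂f(0,0)`; (iv) the distance from `(−1,−1)` to
`{(1,1)}` is `√8`, which does not converge to `0` as `Δ → 0`. -/
theorem example_importance_of_center_agreement :
    -- (i) fully linear models, but disagreeing with F at the centre
    ((∀ i, ContDiff ℝ 1 (F10 i)) ∧
      (∀ Δ ∈ Ioo (0:ℝ) 1, (∀ i, ContDiff ℝ 1 (Ft10 Δ i)) ∧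
        ∀ i, ∀ y ∈ ball (0 : EuclideanSpace ℝ (Fin 2)) Δ,
          |F10 i y - Ft10 Δ i y| ≤ 1 * Δ ^ 2 ∧
          ‖gradient (F10 i) y - gradient (Ft10 Δ i) y‖ ≤ 1 * Δ) ∧
      ∀ Δ ∈ Ioo (0:ℝ) 1, ∃ i, Ft10 Δ i 0 ≠ F10 i 0) ∧
    -- (ii) f̃_Δ is differentiable at (0,0) with gradient (1,1), so ∂f̃_Δ(0,0) = {(1,1)}
    (∀ Δ ∈ Ioo (0:ℝ) 1,
      HasGradientAt (ft10 Δ) ((EuclideanSpace.equiv (Fin 2) ℝ).symm ![1, 1]) 0 ∧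
      rSubdiff (ft10 Δ) 0 = {(EuclideanSpace.equiv (Fin 2) ℝ).symm ![1, 1]}) ∧
    -- (iii) (−1,−1) ∈ ∂f(0,0)
    ((EuclideanSpace.equiv (Fin 2) ℝ).symm ![-1, -1] ∈ rSubdiff f10 0) ∧
    -- (iv) the distance from (−1,−1) to {(1,1)} is √8, not converging to 0
    (∀ Δ ∈ Ioo (0:ℝ) 1,
      infDist ((EuclideanSpace.equiv (Fin 2) ℝ).symm ![-1, -1])
        {((EuclideanSpace.equiv (Fin 2) ℝ).symm ![1, 1] : EuclideanSpace ℝ (Fin 2))} =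
        Real.sqrt 8) ∧
    ¬ Tendsto (fun _ : ℝ =>
        infDist ((EuclideanSpace.equiv (Fin 2) ℝ).symm ![-1, -1])
          {((EuclideanSpace.equiv (Fin 2) ℝ).symm ![1, 1] : EuclideanSpace ℝ (Fin 2))})
      (nhdsWithin 0 (Ioo (0:ℝ) 1)) (nhds 0) := by
  set E := EuclideanSpace ℝ (Fin 2)
  set v : E := (EuclideanSpace.equiv (Fin 2) ℝ).symm ![1, 1] with hv
  have hF10 : ∀ i, ContDiff ℝ 1 (F10 i) := fun i =>
    (EuclideanSpace.proj (𝕜 := ℝ) i).contDiff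
  have hdist : infDist ((EuclideanSpace.equiv (Fin 2) ℝ).symm ![-1, -1] : E) ({v} : Set E) =
      Real.sqrt 8 := by
    rw [infDist_singleton, EuclideanSpace.dist_eq]
    norm_num [Fin.sum_univ_two, hv, Real.dist_eq]
  refine ⟨⟨hF10, ?_, ?_⟩, ?_, ?_, ?_, ?_⟩
  · intro Δ hΔ
    refine ⟨fun i => (hF10 i).add contDiff_const, fun i y _ => ⟨?_, ?_⟩⟩
    · simp [F10, Ft10, abs_of_nonneg (sq_nonneg Δ)]
    · have hfd : fderiv ℝ (Ft10 Δ i) y = fderiv ℝ (F10 i) y := by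
        show fderiv ℝ (fun x => F10 i x + Δ ^ 2) y = _
        exact fderiv_add_const _
      rw [gradient, gradient, hfd, sub_self, norm_zero]
      nlinarith [hΔ.1, hΔ.2]
  · intro Δ hΔ
    refine ⟨0, ?_⟩
    simp only [Ft10, F10]
    have : ((0 : E) 0 : ℝ) = 0 := rfl
    rw [this]
    intro h
    nlinarith [hΔ.1]
  · intro Δ hΔ
    have hΔ2 : 0 < Δ ^ 2 := pow_pos hΔ.1 2
    constructor
    · -- gradient
      rw [hasGradientAt_iff_hasFDerivAt]
      have hL : HasFDerivAt (fun x : E => (InnerProductSpace.toDual ℝ E v) x + 2 * Δ ^ 2)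
          (InnerProductSpace.toDual ℝ E v) 0 := (InnerProductSpace.toDual ℝ E v).hasFDerivAt.add_const _
      apply hL.congr_of_eventuallyEq
      filter_upwards [ball_mem_nhds (0 : E) hΔ2] with x hx
      have h0 : |x 0| < Δ ^ 2 := lt_of_le_of_lt (abs_apply_le_norm' x 0) (by simpa using hx)
      have h1 : |x 1| < Δ ^ 2 := lt_of_le_of_lt (abs_apply_le_norm' x 1) (by simpa using hx)
      have e0 := abs_lt.mp h0
      have e1 := abs_lt.mp h1
      have hLx : (InnerProductSpace.toDual ℝ E v) x = x 0 + x 1 := by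
        rw [hv, InnerProductSpace.toDual_apply_apply, PiLp.inner_apply, Fin.sum_univ_two]
        simp [WithLp.equiv_symm_apply]
      rw [ft10, abs_of_pos (by linarith), abs_of_pos (by linarith), hLx]
      ring
    · ext w
      simp only [rSubdiff, mem_setOf_eq, mem_singleton_iff]
      constructor
      · intro hw
        have key : ∀ i : Fin 2, ∀ t : ℝ,
            ft10 Δ 0 + t * w i ≤ ft10 Δ (EuclideanSpace.single i t) := by
          intro i t
          have := hw (EuclideanSpace.single i t)
          simpa [EuclideanSpace.inner_single_right, mul_comm] using this
        have hft0 : ft10 Δ 0 = 2 * Δ ^ 2 := by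
          simp [ft10, abs_of_pos hΔ2]
          ring
        have hval : ∀ i : Fin 2, ∀ t : ℝ,
            2 * Δ ^ 2 + t * w i ≤ |t + Δ ^ 2| + Δ ^ 2 := by
          intro i t
          have h := key i t
          rw [hft0] at h
          fin_cases i <;>
            simp [ft10, EuclideanSpace.single_apply, abs_of_pos hΔ2] at h ⊢ <;> linarith
        have hwi : ∀ i : Fin 2, w i = 1 := by
          intro i
          have hub : w i ≤ 1 := by
            have := hval i 1
            rw [abs_of_pos (by linarith)] at this
            linarith
          have hlb : 1 ≤ w i := by
            have := hval i (-(Δ ^ 2 / 2))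
            rw [abs_of_pos (by linarith)] at this
            nlinarith
          linarith
        ext i
        rw [hwi i, hv, onevec_apply]
      · intro hW x
        subst hW
        have hinner : (inner ℝ v (x - 0) : ℝ) = x 0 + x 1 := by
          rw [hv, sub_zero, PiLp.inner_apply, Fin.sum_univ_two]
          simp [WithLp.equiv_symm_apply]
        have hft0 : ft10 Δ 0 = 2 * Δ ^ 2 := by
          simp [ft10, abs_of_pos hΔ2]
          ring
        rw [hinner, hft0, ft10]
        have := le_abs_self (x 0 + Δ ^ 2)
        have := le_abs_self (x 1 + Δ ^ 2)
        linarith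
  · intro x
    have hinner : (inner ℝ ((EuclideanSpace.equiv (Fin 2) ℝ).symm ![-1, -1] : E) (x - 0) : ℝ)
        = -(x 0) + -(x 1) := by
      simp [PiLp.inner_apply, Fin.sum_univ_two, WithLp.equiv_symm_apply]
      try ring
    have hf0 : f10 0 = 0 := by
      show |(0:ℝ)| + |(0:ℝ)| = 0
      simp
    rw [hinner, hf0, f10]
    have := neg_abs_le (x 0)
    have := neg_abs_le (x 1)
    linarith
  · intro Δ _; exact hdist
  · intro h
    have hne : (nhdsWithin (0:ℝ) (Ioo (0:ℝ) 1)).NeBot := by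
      rw [← mem_closure_iff_nhdsWithin_neBot, closure_Ioo (by norm_num : (0:ℝ) ≠ 1)]
      exact ⟨le_refl 0, by norm_num⟩
    have hc : Tendsto (fun _ : ℝ =>
        infDist ((EuclideanSpace.equiv (Fin 2) ℝ).symm ![-1, -1] : E) ({v} : Set E))
        (nhdsWithin 0 (Ioo (0:ℝ) 1)) (nhds (Real.sqrt 8)) := by
      rw [hdist]; exact tendsto_const_nhds
    have := tendsto_nhds_unique h hc
    have h8 : (0:ℝ) < Real.sqrt 8 := Real.sqrt_pos.mpr (by norm_num)
    linarith [this ▸ h8]
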